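/- Let (u, τ, S) be a C² classical solution of the compressible Euler equations on ℝ × [0,T). Then the gradient variables satisfy the Riccati equations ∂₊α̃ = k₁( k₂(3α̃ + β̃) + α̃β̃ − α̃² ) and ∂₋β̃ = k₁( −k₂(α̃ + 3β̃) + α̃β̃ − β̃² ) at every point of ℝ × [0,T), where k₁ = ((γ+1)K_c/(2(γ−1))) η^{2/(γ−1)} and k₂ = ((γ−1)/(γ(γ+1))) η m_x. -/

import Mathlib

noncomputable section

open Real Set MeasureTheory
open scoped ENNReal

/-- The time domain `[0, T)`, where `T ∈ (0, ∞]` may be infinite. -/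
def Tset (T : ℝ≥0∞) : Set ℝ := {t : ℝ | 0 ≤ t ∧ ENNReal.ofReal t < T}

/-- `m(x) = exp (S x / (2 c_v))`. -/
def mFun (cv : ℝ) (S : ℝ → ℝ) (x : ℝ) : ℝ := Real.exp (S x / (2 * cv))

/-- `η = (2√(Kγ)/(γ−1)) τ^{−(γ−1)/2}`. -/
def etaFun (K γ : ℝ) (τ : ℝ → ℝ → ℝ) (x t : ℝ) : ℝ :=
  2 * Real.sqrt (K * γ) / (γ - 1) * τ x t ^ (-(γ - 1) / 2)

/-- pressure `p = K e^{S/c_v} τ^{−γ}`. -/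
def pFun (K cv γ : ℝ) (S : ℝ → ℝ) (τ : ℝ → ℝ → ℝ) (x t : ℝ) : ℝ :=
  K * Real.exp (S x / cv) * τ x t ^ (-γ)

/-- `K_τ = (2√(Kγ)/(γ−1))^{2/(γ−1)}`. -/
def Ktau (K γ : ℝ) : ℝ := (2 * Real.sqrt (K * γ) / (γ - 1)) ^ (2 / (γ - 1))

/-- `K_c = √(Kγ) K_τ^{−(γ+1)/2}`. -/
def KcConst (K γ : ℝ) : ℝ := Real.sqrt (K * γ) * Ktau K γ ^ (-(γ + 1) / 2)

/-- wave speed `c = K_c m η^{(γ+1)/(γ−1)}`. -/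
def cFun (K cv γ : ℝ) (S : ℝ → ℝ) (τ : ℝ → ℝ → ℝ) (x t : ℝ) : ℝ :=
  KcConst K γ * mFun cv S x * etaFun K γ τ x t ^ ((γ + 1) / (γ - 1))

/-- gradient variable `α̃ = u_x + m η_x + ((γ−1)/γ) m_x η`. -/
def alphaT (K cv γ : ℝ) (S : ℝ → ℝ) (u τ : ℝ → ℝ → ℝ) (x t : ℝ) : ℝ :=
  deriv (fun x' => u x' t) x + mFun cv S x * deriv (fun x' => etaFun K γ τ x' t) x
    + (γ - 1) / γ * deriv (mFun cv S) x * etaFun K γ τ x t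

/-- gradient variable `β̃ = u_x − m η_x − ((γ−1)/γ) m_x η`. -/
def betaT (K cv γ : ℝ) (S : ℝ → ℝ) (u τ : ℝ → ℝ → ℝ) (x t : ℝ) : ℝ :=
  deriv (fun x' => u x' t) x - mFun cv S x * deriv (fun x' => etaFun K γ τ x' t) x
    - (γ - 1) / γ * deriv (mFun cv S) x * etaFun K γ τ x t

/-- A classical solution of the compressible Euler equations on `ℝ × [0,T)`:
`τ > 0`, `τ_t = u_x` and `u_t = −p_x` pointwise (the entropy `S = S(x)` is
time-independent by fiat, which encodes `S_t = 0`). -/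
def IsEulerSol (K cv γ : ℝ) (T : ℝ≥0∞) (u τ : ℝ → ℝ → ℝ) (S : ℝ → ℝ) : Prop :=
  (∀ x : ℝ, ∀ t ∈ Tset T, 0 < τ x t) ∧
  (∀ x : ℝ, ∀ t ∈ Tset T,
    HasDerivWithinAt (fun t' => τ x t') (deriv (fun x' => u x' t) x) (Tset T) t) ∧
  (∀ x : ℝ, ∀ t ∈ Tset T,
    HasDerivWithinAt (fun t' => u x t')
      (-(deriv (fun x' => pFun K cv γ S τ x' t) x)) (Tset T) t)

/-- `C^k` regularity of the solution on `ℝ × [0,T)`. -/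
def IsCkSol (k : ℕ) (T : ℝ≥0∞) (u τ : ℝ → ℝ → ℝ) (S : ℝ → ℝ) : Prop :=
  ContDiffOn ℝ k (fun q : ℝ × ℝ => u q.1 q.2) ((Set.univ : Set ℝ) ×ˢ Tset T) ∧
  ContDiffOn ℝ k (fun q : ℝ × ℝ => τ q.1 q.2) ((Set.univ : Set ℝ) ×ˢ Tset T) ∧
  ContDiff ℝ k S

/-- `M* = 4 M_η M_D · max{2(γ−1)/γ, ((3γ−1)/(γ+1))·(4/γ)}`. -/
def Mstar (γ Mη MD : ℝ) : ℝ :=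
  4 * Mη * MD * max (2 * (γ - 1) / γ) ((3 * γ - 1) / (γ + 1) * (4 / γ))

/-- `λ = (1/(4M_η))·((γ+1)/(3γ−1))·M*`. -/
def lamConst (γ Mη MD : ℝ) : ℝ :=
  1 / (4 * Mη) * ((γ + 1) / (3 * γ - 1)) * Mstar γ Mη MD

/-- transformed gradient variable `α = α̃ + λ η`. -/
def alphaV (K cv γ lam : ℝ) (S : ℝ → ℝ) (u τ : ℝ → ℝ → ℝ) (x t : ℝ) : ℝ :=
  alphaT K cv γ S u τ x t + lam * etaFun K γ τ x t

/-- transformed gradient variable `β = β̃ + λ η`. -/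
def betaV (K cv γ lam : ℝ) (S : ℝ → ℝ) (u τ : ℝ → ℝ → ℝ) (x t : ℝ) : ℝ :=
  betaT K cv γ S u τ x t + lam * etaFun K γ τ x t


section RiccatiHelpers

open Filter

lemma tset_cases (T : ℝ≥0∞) : Tset T = Ico (0:ℝ) T.toReal ∨ Tset T = Ici (0:ℝ) := by
  by_cases hT : T = ⊤
  · right
    ext t
    simp [Tset, hT, mem_Ici]
  · left
    ext t
    simp only [Tset, mem_setOf_eq, mem_Ico]
    exact and_congr_right fun h0 => ENNReal.ofReal_lt_iff_lt_toReal h0 hT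

lemma tset_uniqueDiffOn (T : ℝ≥0∞) : UniqueDiffOn ℝ (Tset T) := by
  rcases tset_cases T with h | h <;> rw [h]
  · exact uniqueDiffOn_Ico _ _
  · exact uniqueDiffOn_Ici _

lemma tset_closure_interior {T : ℝ≥0∞} {t : ℝ} (ht : t ∈ Tset T) :
    t ∈ closure (interior (Tset T)) := by
  rcases tset_cases T with h | h <;> rw [h] <;> rw [h] at ht
  · have h0 : (0:ℝ) < T.toReal := lt_of_le_of_lt ht.1 ht.2
    rw [interior_Ico, closure_Ioo (ne_of_lt h0)]
    exact ⟨ht.1, le_of_lt ht.2⟩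
  · rw [interior_Ici, closure_Ioi]
    exact ht

lemma slice_x {T : ℝ≥0∞} {F : ℝ → ℝ → ℝ}
    (hF : ContDiffOn ℝ 2 (fun q : ℝ × ℝ => F q.1 q.2) ((univ : Set ℝ) ×ˢ Tset T))
    {x' t' : ℝ} (ht' : t' ∈ Tset T) :
    HasDerivAt (fun y => F y t')
      (fderivWithin ℝ (fun q : ℝ × ℝ => F q.1 q.2) ((univ : Set ℝ) ×ˢ Tset T) (x', t') (1, 0)) x' := by
  have hmem : ((x', t') : ℝ × ℝ) ∈ (univ : Set ℝ) ×ˢ Tset T := ⟨mem_univ _, ht'⟩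
  have hd := ((hF.differentiableOn (by norm_num)) _ hmem).hasFDerivWithinAt
  have hcurve : HasDerivAt (fun y : ℝ => ((y, t') : ℝ × ℝ)) ((1:ℝ), (0:ℝ)) x' :=
    (hasDerivAt_id x').prodMk (hasDerivAt_const x' t')
  have hmap : MapsTo (fun y : ℝ => ((y, t') : ℝ × ℝ)) univ ((univ : Set ℝ) ×ˢ Tset T) :=
    fun y _ => ⟨mem_univ _, ht'⟩
  have := hd.comp_hasDerivWithinAt x' (hcurve.hasDerivWithinAt (s := univ)) hmap
  rw [hasDerivWithinAt_univ] at this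
  exact this

lemma slice_t {T : ℝ≥0∞} {F : ℝ → ℝ → ℝ}
    (hF : ContDiffOn ℝ 2 (fun q : ℝ × ℝ => F q.1 q.2) ((univ : Set ℝ) ×ˢ Tset T))
    {x' t' : ℝ} (ht' : t' ∈ Tset T) :
    HasDerivWithinAt (fun s => F x' s)
      (fderivWithin ℝ (fun q : ℝ × ℝ => F q.1 q.2) ((univ : Set ℝ) ×ˢ Tset T) (x', t') (0, 1))
      (Tset T) t' := by
  have hmem : ((x', t') : ℝ × ℝ) ∈ (univ : Set ℝ) ×ˢ Tset T := ⟨mem_univ _, ht'⟩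
  have hd := ((hF.differentiableOn (by norm_num)) _ hmem).hasFDerivWithinAt
  have hcurve : HasDerivWithinAt (fun s : ℝ => ((x', s) : ℝ × ℝ)) ((0:ℝ), (1:ℝ)) (Tset T) t' :=
    ((hasDerivAt_const t' x').prodMk (hasDerivAt_id t')).hasDerivWithinAt
  have hmap : MapsTo (fun s : ℝ => ((x', s) : ℝ × ℝ)) (Tset T) ((univ : Set ℝ) ×ˢ Tset T) :=
    fun s hs => ⟨mem_univ _, hs⟩
  exact hd.comp_hasDerivWithinAt t' hcurve hmap

lemma slice_contDiff {T : ℝ≥0∞} {F : ℝ → ℝ → ℝ}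
    (hF : ContDiffOn ℝ 2 (fun q : ℝ × ℝ => F q.1 q.2) ((univ : Set ℝ) ×ˢ Tset T))
    {t : ℝ} (ht : t ∈ Tset T) : ContDiff ℝ 2 (fun y => F y t) := by
  have hmap : MapsTo (fun y : ℝ => ((y, t) : ℝ × ℝ)) univ ((univ : Set ℝ) ×ˢ Tset T) :=
    fun y _ => ⟨mem_univ _, ht⟩
  have := hF.comp ((contDiff_id.prodMk contDiff_const).contDiffOn) hmap
  rwa [contDiffOn_univ] at this

lemma mixed_partial {T : ℝ≥0∞} {F : ℝ → ℝ → ℝ}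
    (hF : ContDiffOn ℝ 2 (fun q : ℝ × ℝ => F q.1 q.2) ((univ : Set ℝ) ×ˢ Tset T))
    {x t : ℝ} (ht : t ∈ Tset T) :
    ∃ D : ℝ, HasDerivWithinAt (fun t' => deriv (fun y => F y t') x) D (Tset T) t ∧
      HasDerivAt (fun x' => derivWithin (fun s => F x' s) (Tset T) t) D x := by
  have hΩu : UniqueDiffOn ℝ ((univ : Set ℝ) ×ˢ Tset T) :=
    uniqueDiffOn_univ.prod (tset_uniqueDiffOn T)
  have hmem : ((x, t) : ℝ × ℝ) ∈ (univ : Set ℝ) ×ˢ Tset T := ⟨mem_univ _, ht⟩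
  set Ω := (univ : Set ℝ) ×ˢ Tset T with hΩ
  set F2 := fun q : ℝ × ℝ => F q.1 q.2 with hF2
  set G := fderivWithin ℝ F2 Ω with hG
  have hGc : ContDiffOn ℝ 1 G Ω := hF.fderivWithin hΩu (by norm_num)
  set D2 := fderivWithin ℝ G Ω (x, t) with hD2
  have hGd : HasFDerivWithinAt G D2 Ω (x, t) :=
    ((hGc.differentiableOn one_ne_zero) _ hmem).hasFDerivWithinAt
  have hcl : ((x, t) : ℝ × ℝ) ∈ closure (interior Ω) := by
    rw [hΩ, interior_prod_eq, closure_prod_eq, interior_univ, closure_univ]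
    exact ⟨mem_univ _, tset_closure_interior ht⟩
  have hsym : IsSymmSndFDerivWithinAt ℝ F2 Ω (x, t) :=
    (hF _ hmem).isSymmSndFDerivWithinAt (by norm_num) hΩu hcl hmem
  refine ⟨D2 (0, 1) (1, 0), ?_, ?_⟩
  · have hcurve : HasDerivWithinAt (fun s : ℝ => ((x, s) : ℝ × ℝ)) ((0:ℝ), (1:ℝ)) (Tset T) t :=
      ((hasDerivAt_const t x).prodMk (hasDerivAt_id t)).hasDerivWithinAt
    have hmap : MapsTo (fun s : ℝ => ((x, s) : ℝ × ℝ)) (Tset T) Ω := fun s hs => ⟨mem_univ _, hs⟩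
    have h1 : HasDerivWithinAt (fun s => G (x, s)) (D2 (0, 1)) (Tset T) t :=
      hGd.comp_hasDerivWithinAt t hcurve hmap
    have h2 : HasDerivWithinAt (fun s => G (x, s) ((1:ℝ), (0:ℝ))) (D2 (0, 1) (1, 0)) (Tset T) t := by
      have := h1.clm_apply (hasDerivWithinAt_const t _ ((1:ℝ), (0:ℝ)))
      simpa using this
    refine h2.congr (fun s hs => ?_) ?_
    · exact ((slice_x hF hs).deriv).symm ▸ rfl
    · exact ((slice_x hF ht).deriv).symm ▸ rfl
  · have hcurve : HasDerivAt (fun y : ℝ => ((y, t) : ℝ × ℝ)) ((1:ℝ), (0:ℝ)) x :=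
      (hasDerivAt_id x).prodMk (hasDerivAt_const x t)
    have hmap : MapsTo (fun y : ℝ => ((y, t) : ℝ × ℝ)) univ Ω := fun y _ => ⟨mem_univ _, ht⟩
    have h1 : HasDerivWithinAt (fun y => G (y, t)) (D2 (1, 0)) univ x :=
      hGd.comp_hasDerivWithinAt x (hcurve.hasDerivWithinAt (s := univ)) hmap
    rw [hasDerivWithinAt_univ] at h1
    have h2 : HasDerivAt (fun y => G (y, t) ((0:ℝ), (1:ℝ))) (D2 (1, 0) (0, 1)) x := by
      have := h1.clm_apply (hasDerivAt_const x ((0:ℝ), (1:ℝ)))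
      simpa using this
    have h3 : HasDerivAt (fun x' => derivWithin (fun s => F x' s) (Tset T) t)
        (D2 (1, 0) (0, 1)) x := by
      refine h2.congr_of_eventuallyEq (Filter.Eventually.of_forall fun y => ?_)
      exact (slice_t hF ht).derivWithin ((tset_uniqueDiffOn T) t ht)
    have : D2 (1, 0) (0, 1) = D2 (0, 1) (1, 0) := hsym.eq _ _
    rwa [this] at h3

lemma hasDerivAt_deriv_of_contDiff_two {f : ℝ → ℝ} (hf : ContDiff ℝ 2 f) (x : ℝ) :
    HasDerivAt (deriv f) (deriv (deriv f) x) x := by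
  have h2 : ContDiff ℝ ((1 : WithTop ℕ∞) + 1) f := by
    rw [show ((1 : WithTop ℕ∞) + 1) = 2 by norm_num]; exact hf
  have h := (contDiff_succ_iff_deriv.mp h2).2.2
  exact ((h.differentiable one_ne_zero) x).hasDerivAt

end RiccatiHelpers

set_option maxHeartbeats 2000000 in
/-- Proposition 3.1: Riccati equations for `α̃` and `β̃`.
For a `C²` classical solution, `∂₊α̃ = k₁(k₂(3α̃+β̃) + α̃β̃ − α̃²)` and
`∂₋β̃ = k₁(−k₂(α̃+3β̃) + α̃β̃ − β̃²)`, where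
`k₁ = ((γ+1)K_c/(2(γ−1))) η^{2/(γ−1)}` and `k₂ = ((γ−1)/(γ(γ+1))) η m_x`. -/
theorem riccati_equations
    (K cv γ : ℝ) (hK : 0 < K) (hcv : 0 < cv) (hγ : 1 < γ)
    (T : ℝ≥0∞) (hT : 0 < T)
    (u τ : ℝ → ℝ → ℝ) (S : ℝ → ℝ)
    (hsol : IsEulerSol K cv γ T u τ S)
    (hreg : IsCkSol 2 T u τ S) :
    ∀ x : ℝ, ∀ t ∈ Tset T,
      (derivWithin (fun t' => alphaT K cv γ S u τ x t') (Tset T) t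
          + cFun K cv γ S τ x t * deriv (fun x' => alphaT K cv γ S u τ x' t) x
        = ((γ + 1) * KcConst K γ / (2 * (γ - 1)) * etaFun K γ τ x t ^ (2 / (γ - 1)))
          * ((γ - 1) / (γ * (γ + 1)) * etaFun K γ τ x t * deriv (mFun cv S) x
                * (3 * alphaT K cv γ S u τ x t + betaT K cv γ S u τ x t)
              + alphaT K cv γ S u τ x t * betaT K cv γ S u τ x t
              - alphaT K cv γ S u τ x t ^ 2)) ∧
      (derivWithin (fun t' => betaT K cv γ S u τ x t') (Tset T) t
          - cFun K cv γ S τ x t * deriv (fun x' => betaT K cv γ S u τ x' t) x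
        = ((γ + 1) * KcConst K γ / (2 * (γ - 1)) * etaFun K γ τ x t ^ (2 / (γ - 1)))
          * (-((γ - 1) / (γ * (γ + 1)) * etaFun K γ τ x t * deriv (mFun cv S) x)
                * (alphaT K cv γ S u τ x t + 3 * betaT K cv γ S u τ x t)
              + alphaT K cv γ S u τ x t * betaT K cv γ S u τ x t
              - betaT K cv γ S u τ x t ^ 2)) := by
  intro x t ht
  obtain ⟨hpos, hτt, hut⟩ := hsol
  have hu2c : ContDiffOn ℝ 2 (fun q : ℝ × ℝ => u q.1 q.2) ((univ : Set ℝ) ×ˢ Tset T) := by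
    exact_mod_cast hreg.1
  have hτ2c : ContDiffOn ℝ 2 (fun q : ℝ × ℝ => τ q.1 q.2) ((univ : Set ℝ) ×ˢ Tset T) := by
    exact_mod_cast hreg.2.1
  have hS2 : ContDiff ℝ 2 S := by exact_mod_cast hreg.2.2
  have hγ0 : (0:ℝ) < γ := lt_trans one_pos hγ
  have hγ1 : (0:ℝ) < γ - 1 := sub_pos.2 hγ
  have hKγ : (0:ℝ) < K * γ := mul_pos hK hγ0
  have hQ : (0:ℝ) < Real.sqrt (K * γ) := Real.sqrt_pos.2 hKγ
  have hA : (0:ℝ) < 2 * Real.sqrt (K * γ) / (γ - 1) := div_pos (by linarith) hγ1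
  have hτ0 : (0:ℝ) < τ x t := hpos x t ht
  have hne : ∀ y, τ y t ≠ 0 := fun y => (hpos y t ht).ne'
  have UD : UniqueDiffWithinAt ℝ (Tset T) t := (tset_uniqueDiffOn T) t ht
  have hcd_u : ContDiff ℝ 2 (fun y => u y t) := slice_contDiff hu2c ht
  have hcd_τ : ContDiff ℝ 2 (fun y => τ y t) := slice_contDiff hτ2c ht
  have hcd_m : ContDiff ℝ 2 (mFun cv S) :=
    Real.contDiff_exp.comp (hS2.div_const (2 * cv))
  have hτ' : ∀ y, HasDerivAt (fun x' => τ x' t) (deriv (fun x' => τ x' t) y) y :=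
    fun y => ((hcd_τ.differentiable (by norm_num)) y).hasDerivAt
  have hm' : ∀ y, HasDerivAt (mFun cv S) (deriv (mFun cv S) y) y :=
    fun y => ((hcd_m.differentiable (by norm_num)) y).hasDerivAt
  have hτ'' := hasDerivAt_deriv_of_contDiff_two hcd_τ x
  have hm'' := hasDerivAt_deriv_of_contDiff_two hcd_m x
  have hU1' := hasDerivAt_deriv_of_contDiff_two hcd_u x
  have hηx : ∀ y, HasDerivAt (fun x' => etaFun K γ τ x' t) (2 * Real.sqrt (K * γ) / (γ - 1) * (deriv (fun x' => τ x' t) y * (-(γ - 1) / 2) * τ y t ^ (-(γ - 1) / 2 - 1))) y :=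
    fun y => ((hτ' y).rpow_const (Or.inl (hne y))).const_mul _
  have hηxe : ∀ y, deriv (fun x' => etaFun K γ τ x' t) y = 2 * Real.sqrt (K * γ) / (γ - 1) * (deriv (fun x' => τ x' t) y * (-(γ - 1) / 2) * τ y t ^ (-(γ - 1) / 2 - 1)) :=
    fun y => (hηx y).deriv
  have hpow1' : HasDerivAt (fun y => τ y t ^ (-(γ - 1) / 2 - 1))
      (deriv (fun x' => τ x' t) x * (-(γ - 1) / 2 - 1) * τ x t ^ (-(γ - 1) / 2 - 1 - 1)) x :=
    (hτ' x).rpow_const (Or.inl (hne x))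
  have hηxx : HasDerivAt (fun y => 2 * Real.sqrt (K * γ) / (γ - 1) * (deriv (fun x' => τ x' t) y * (-(γ - 1) / 2) * τ y t ^ (-(γ - 1) / 2 - 1))) (2 * Real.sqrt (K * γ) / (γ - 1) * (deriv (deriv (fun x' => τ x' t)) x * (-(γ - 1) / 2) * τ x t ^ (-(γ - 1) / 2 - 1) + deriv (fun x' => τ x' t) x * (-(γ - 1) / 2) * (deriv (fun x' => τ x' t) x * (-(γ - 1) / 2 - 1) * τ x t ^ (-(γ - 1) / 2 - 1 - 1)))) x :=
    ((hτ''.mul_const (-(γ - 1) / 2)).mul hpow1').const_mul _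
  have pexp : ∀ y, Real.exp (S y / cv) = mFun cv S y * mFun cv S y := by
    intro y
    simp only [mFun, ← Real.exp_add]
    congr 1
    field_simp
    ring
  have hE : ∀ y, HasDerivAt (fun z => Real.exp (S z / cv))
      (2 * mFun cv S y * deriv (mFun cv S) y) y := by
    intro y
    have h := (hm' y).mul (hm' y)
    have h2 : HasDerivAt (fun z => Real.exp (S z / cv))
        (deriv (mFun cv S) y * mFun cv S y + mFun cv S y * deriv (mFun cv S) y) y :=
      h.congr_of_eventuallyEq (Filter.Eventually.of_forall fun z => pexp z)
    convert h2 using 1; ring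
  have hps : ∀ y, HasDerivAt (fun z => pFun K cv γ S τ z t)
      (K * (2 * mFun cv S y * deriv (mFun cv S) y) * τ y t ^ (-γ) +
        K * Real.exp (S y / cv) * (deriv (fun x' => τ x' t) y * -γ * τ y t ^ (-γ - 1))) y :=
    fun y => ((hE y).const_mul K).mul ((hτ' y).rpow_const (Or.inl (hne y)))
  have hpxe : ∀ y, deriv (fun x' => pFun K cv γ S τ x' t) y = K * (2 * mFun cv S y * deriv (mFun cv S) y) * τ y t ^ (-γ) + K * (mFun cv S y * mFun cv S y) * (deriv (fun x' => τ x' t) y * -γ * τ y t ^ (-γ - 1)) := by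
    intro y
    rw [(hps y).deriv, pexp y]
  have hpow3 : HasDerivAt (fun y => τ y t ^ (-γ))
      (deriv (fun x' => τ x' t) x * -γ * τ x t ^ (-γ - 1)) x :=
    (hτ' x).rpow_const (Or.inl (hne x))
  have hpow4 : HasDerivAt (fun y => τ y t ^ (-γ - 1))
      (deriv (fun x' => τ x' t) x * (-γ - 1) * τ x t ^ (-γ - 1 - 1)) x :=
    (hτ' x).rpow_const (Or.inl (hne x))
  have hpxx := (((((hm' x).const_mul 2).mul hm'').const_mul K).mul hpow3).add
      ((((hm' x).mul (hm' x)).const_mul K).mul ((hτ''.mul_const (-γ)).mul hpow4))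
  -- mixed partials for u
  obtain ⟨Du, hDu_t, hDu_x⟩ := mixed_partial hu2c ht (x := x)
  have hfeq_u : (fun x' => derivWithin (fun s => u x' s) (Tset T) t)
      = (fun y => -(K * (2 * mFun cv S y * deriv (mFun cv S) y) * τ y t ^ (-γ) + K * (mFun cv S y * mFun cv S y) * (deriv (fun x' => τ x' t) y * -γ * τ y t ^ (-γ - 1)))) := by
    funext y
    rw [(hut y t ht).derivWithin UD, hpxe y]
  rw [hfeq_u] at hDu_x
  have hDu_eq := hDu_x.unique hpxx.neg
  -- mixed partials for η
  have hη2 : ContDiffOn ℝ 2 (fun q : ℝ × ℝ => etaFun K γ τ q.1 q.2)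
      ((univ : Set ℝ) ×ˢ Tset T) := by
    intro q hq
    exact contDiffWithinAt_const.mul ((hτ2c q hq).rpow_const_of_ne (hpos q.1 q.2 hq.2).ne')
  obtain ⟨Dη, hDη_t, hDη_x⟩ := mixed_partial hη2 ht (x := x)
  have hηt : ∀ y, HasDerivWithinAt (fun s => etaFun K γ τ y s) (2 * Real.sqrt (K * γ) / (γ - 1) * (deriv (fun x' => u x' t) y * (-(γ - 1) / 2) * τ y t ^ (-(γ - 1) / 2 - 1))) (Tset T) t :=
    fun y => ((hτt y t ht).rpow_const (Or.inl (hne y))).const_mul _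
  have hfeq_η : (fun x' => derivWithin (fun s => etaFun K γ τ x' s) (Tset T) t)
      = (fun y => 2 * Real.sqrt (K * γ) / (γ - 1) * (deriv (fun x' => u x' t) y * (-(γ - 1) / 2) * τ y t ^ (-(γ - 1) / 2 - 1))) := by
    funext y
    rw [(hηt y).derivWithin UD]
  rw [hfeq_η] at hDη_x
  have hηtx : HasDerivAt (fun y => 2 * Real.sqrt (K * γ) / (γ - 1) * (deriv (fun x' => u x' t) y * (-(γ - 1) / 2) * τ y t ^ (-(γ - 1) / 2 - 1))) (2 * Real.sqrt (K * γ) / (γ - 1) * (deriv (deriv (fun x' => u x' t)) x * (-(γ - 1) / 2) * τ x t ^ (-(γ - 1) / 2 - 1) + deriv (fun x' => u x' t) x * (-(γ - 1) / 2) * (deriv (fun x' => τ x' t) x * (-(γ - 1) / 2 - 1) * τ x t ^ (-(γ - 1) / 2 - 1 - 1)))) x :=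
    ((hU1'.mul_const (-(γ - 1) / 2)).mul hpow1').const_mul _
  have hDη_eq := hDη_x.unique hηtx
  -- time derivatives of α̃ and β̃
  have hαt2 : derivWithin (fun t' => deriv (fun x' => u x' t') x + mFun cv S x * deriv (fun x' => etaFun K γ τ x' t') x + (γ - 1) / γ * deriv (mFun cv S) x * etaFun K γ τ x t') (Tset T) t
      = Du + mFun cv S x * Dη + (γ - 1) / γ * deriv (mFun cv S) x * (2 * Real.sqrt (K * γ) / (γ - 1) * (deriv (fun x' => u x' t) x * (-(γ - 1) / 2) * τ x t ^ (-(γ - 1) / 2 - 1))) :=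
    ((hDu_t.add (hDη_t.const_mul (mFun cv S x))).add
      ((hηt x).const_mul ((γ - 1) / γ * deriv (mFun cv S) x))).derivWithin UD
  have hβt2 : derivWithin (fun t' => deriv (fun x' => u x' t') x - mFun cv S x * deriv (fun x' => etaFun K γ τ x' t') x - (γ - 1) / γ * deriv (mFun cv S) x * etaFun K γ τ x t') (Tset T) t
      = Du - mFun cv S x * Dη - (γ - 1) / γ * deriv (mFun cv S) x * (2 * Real.sqrt (K * γ) / (γ - 1) * (deriv (fun x' => u x' t) x * (-(γ - 1) / 2) * τ x t ^ (-(γ - 1) / 2 - 1))) :=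
    ((hDu_t.sub (hDη_t.const_mul (mFun cv S x))).sub
      ((hηt x).const_mul ((γ - 1) / γ * deriv (mFun cv S) x))).derivWithin UD
  -- x derivatives of α̃ and β̃
  have hαx_exp : HasDerivAt (fun y => deriv (fun x' => u x' t) y + mFun cv S y * (2 * Real.sqrt (K * γ) / (γ - 1) * (deriv (fun x' => τ x' t) y * (-(γ - 1) / 2) * τ y t ^ (-(γ - 1) / 2 - 1))) + (γ - 1) / γ * deriv (mFun cv S) y * etaFun K γ τ y t) (deriv (deriv (fun x' => u x' t)) x + (deriv (mFun cv S) x * (2 * Real.sqrt (K * γ) / (γ - 1) * (deriv (fun x' => τ x' t) x * (-(γ - 1) / 2) * τ x t ^ (-(γ - 1) / 2 - 1))) + mFun cv S x * (2 * Real.sqrt (K * γ) / (γ - 1) * (deriv (deriv (fun x' => τ x' t)) x * (-(γ - 1) / 2) * τ x t ^ (-(γ - 1) / 2 - 1) + deriv (fun x' => τ x' t) x * (-(γ - 1) / 2) * (deriv (fun x' => τ x' t) x * (-(γ - 1) / 2 - 1) * τ x t ^ (-(γ - 1) / 2 - 1 - 1))))) + ((γ - 1) / γ * deriv (deriv (mFun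 cv S)) x * etaFun K γ τ x t + (γ - 1) / γ * deriv (mFun cv S) x * (2 * Real.sqrt (K * γ) / (γ - 1) * (deriv (fun x' => τ x' t) x * (-(γ - 1) / 2) * τ x t ^ (-(γ - 1) / 2 - 1))))) x :=
    (hU1'.add ((hm' x).mul hηxx)).add ((hm''.const_mul ((γ - 1) / γ)).mul (hηx x))
  have hβx_exp : HasDerivAt (fun y => deriv (fun x' => u x' t) y - mFun cv S y * (2 * Real.sqrt (K * γ) / (γ - 1) * (deriv (fun x' => τ x' t) y * (-(γ - 1) / 2) * τ y t ^ (-(γ - 1) / 2 - 1))) - (γ - 1) / γ * deriv (mFun cv S) y * etaFun K γ τ y t) (deriv (deriv (fun x' => u x' t)) x - (deriv (mFun cv S) x * (2 * Real.sqrt (K * γ) / (γ - 1) * (deriv (fun x' => τ x' t) x * (-(γ - 1) / 2) * τ x t ^ (-(γ - 1) / 2 - 1))) + mFun cv S x * (2 * Real.sqrt (K * γ) / (γ - 1) * (deriv (deriv (fun x' => τ x' t)) x * (-(γ - 1) / 2) * τ x t ^ (-(γ - 1) / 2 - 1) + deriv (fun x' => τ x' t) x * (-(γ - 1) / 2) *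 (deriv (fun x' => τ x' t) x * (-(γ - 1) / 2 - 1) * τ x t ^ (-(γ - 1) / 2 - 1 - 1))))) - ((γ - 1) / γ * deriv (deriv (mFun cv S)) x * etaFun K γ τ x t + (γ - 1) / γ * deriv (mFun cv S) x * (2 * Real.sqrt (K * γ) / (γ - 1) * (deriv (fun x' => τ x' t) x * (-(γ - 1) / 2) * τ x t ^ (-(γ - 1) / 2 - 1))))) x :=
    (hU1'.sub ((hm' x).mul hηxx)).sub ((hm''.const_mul ((γ - 1) / γ)).mul (hηx x))
  have hαx2 : deriv (fun x' => deriv (fun x' => u x' t) x' + mFun cv S x' * deriv (fun x' => etaFun K γ τ x' t) x' + (γ - 1) / γ * deriv (mFun cv S) x' * etaFun K γ τ x' t) x = deriv (deriv (fun x' => u x' t)) x + (deriv (mFun cv S) x * (2 * Real.sqrt (K * γ) / (γ - 1) * (deriv (fun x' => τ x' t) x * (-(γ - 1) / 2) * τ x t ^ (-(γ - 1) / 2 - 1))) + mFun cv S x * (2 * Real.sqrt (K * γ) / (γ - 1) * (deriv (deriv (fun x' => τ x' t)) x * (-(γ - 1) / 2) * τ x t ^ (-(γ - 1) / 2 - 1)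 + deriv (fun x' => τ x' t) x * (-(γ - 1) / 2) * (deriv (fun x' => τ x' t) x * (-(γ - 1) / 2 - 1) * τ x t ^ (-(γ - 1) / 2 - 1 - 1))))) + ((γ - 1) / γ * deriv (deriv (mFun cv S)) x * etaFun K γ τ x t + (γ - 1) / γ * deriv (mFun cv S) x * (2 * Real.sqrt (K * γ) / (γ - 1) * (deriv (fun x' => τ x' t) x * (-(γ - 1) / 2) * τ x t ^ (-(γ - 1) / 2 - 1)))) :=
    (hαx_exp.congr_of_eventuallyEq (Filter.Eventually.of_forall fun y => by rw [hηxe y])).deriv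
  have hβx2 : deriv (fun x' => deriv (fun x' => u x' t) x' - mFun cv S x' * deriv (fun x' => etaFun K γ τ x' t) x' - (γ - 1) / γ * deriv (mFun cv S) x' * etaFun K γ τ x' t) x = deriv (deriv (fun x' => u x' t)) x - (deriv (mFun cv S) x * (2 * Real.sqrt (K * γ) / (γ - 1) * (deriv (fun x' => τ x' t) x * (-(γ - 1) / 2) * τ x t ^ (-(γ - 1) / 2 - 1))) + mFun cv S x * (2 * Real.sqrt (K * γ) / (γ - 1) * (deriv (deriv (fun x' => τ x' t)) x * (-(γ - 1) / 2) * τ x t ^ (-(γ - 1) / 2 - 1) + deriv (fun x' => τ x' t) x * (-(γ - 1) / 2) * (deriv (fun x' => τ x' t) x * (-(γ - 1) / 2 - 1) * τ x t ^ (-(γ - 1) / 2 - 1 - 1))))) - ((γ - 1) / γ * deriv (deriv (mFun cv S)) x * etaFun K γ τ x t + (γ - 1) / γ * deriv (mFun cv S) x * (2 * Real.sqrt (K * γ) / (γ - 1) * (deriv (fun x' => τ x' t) x * (-(γ - 1) / 2) * τ x t ^ (-(γ - 1) / 2 - 1)))) :=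
    (hβx_exp.congr_of_eventuallyEq (Filter.Eventually.of_forall fun y => by rw [hηxe y])).deriv
  -- constants
  have hη0 : etaFun K γ τ x t = 2 * Real.sqrt (K * γ) / (γ - 1) * τ x t ^ (-(γ - 1) / 2) := rfl
  have hηb : etaFun K γ τ x t ^ ((γ + 1) / (γ - 1)) =
      (2 * Real.sqrt (K * γ) / (γ - 1)) ^ ((γ + 1) / (γ - 1)) * (τ x t ^ (-(γ - 1) / 2) / τ x t) := by
    rw [hη0, Real.mul_rpow hA.le (Real.rpow_nonneg hτ0.le _), ← Real.rpow_mul hτ0.le,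
      show -(γ - 1) / 2 * ((γ + 1) / (γ - 1)) = -(γ - 1) / 2 + -1 by field_simp; ring,
      Real.rpow_add hτ0, Real.rpow_neg_one]
    ring
  have hKcA : KcConst K γ * (2 * Real.sqrt (K * γ) / (γ - 1)) ^ ((γ + 1) / (γ - 1))
      = Real.sqrt (K * γ) := by
    rw [KcConst, Ktau, ← Real.rpow_mul hA.le, mul_assoc, ← Real.rpow_add hA,
      show 2 / (γ - 1) * (-(γ + 1) / 2) + (γ + 1) / (γ - 1) = 0 by field_simp; ring,
      Real.rpow_zero, mul_one]
  have hcval : cFun K cv γ S τ x t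
      = Real.sqrt (K * γ) * mFun cv S x * (τ x t ^ (-(γ - 1) / 2) / τ x t) := by
    rw [show cFun K cv γ S τ x t
        = KcConst K γ * mFun cv S x * etaFun K γ τ x t ^ ((γ + 1) / (γ - 1)) from rfl, hηb]
    linear_combination (mFun cv S x * (τ x t ^ (-(γ - 1) / 2) / τ x t)) * hKcA
  have hηk : etaFun K γ τ x t ^ (2 / (γ - 1)) =
      (2 * Real.sqrt (K * γ) / (γ - 1)) ^ (2 / (γ - 1)) * (τ x t)⁻¹ := by
    rw [hη0, Real.mul_rpow hA.le (Real.rpow_nonneg hτ0.le _), ← Real.rpow_mul hτ0.le,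
      show -(γ - 1) / 2 * (2 / (γ - 1)) = -1 by field_simp, Real.rpow_neg_one]
  have hKcKt : KcConst K γ * (2 * Real.sqrt (K * γ) / (γ - 1)) ^ (2 / (γ - 1)) * 2 = γ - 1 := by
    rw [KcConst, Ktau, ← Real.rpow_mul hA.le, mul_assoc (Real.sqrt (K * γ)), ← Real.rpow_add hA,
      show 2 / (γ - 1) * (-(γ + 1) / 2) + 2 / (γ - 1) = -1 by field_simp; ring,
      Real.rpow_neg_one]
    field_simp
  have hk : (γ + 1) * KcConst K γ / (2 * (γ - 1)) * etaFun K γ τ x t ^ (2 / (γ - 1))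
      = (γ + 1) / (4 * τ x t) := by
    have hKA : KcConst K γ * (2 * Real.sqrt (K * γ) / (γ - 1)) ^ (2 / (γ - 1)) = (γ - 1) / 2 := by
      linarith [hKcKt]
    rw [hηk, show (γ + 1) * KcConst K γ / (2 * (γ - 1)) *
        ((2 * Real.sqrt (K * γ) / (γ - 1)) ^ (2 / (γ - 1)) * (τ x t)⁻¹)
        = (KcConst K γ * (2 * Real.sqrt (K * γ) / (γ - 1)) ^ (2 / (γ - 1)))
          * ((γ + 1) / (2 * (γ - 1)) * (τ x t)⁻¹) by ring, hKA]
    field_simp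
    ring
  -- power reductions
  have e1 : τ x t ^ (-(γ - 1) / 2 - 1) = τ x t ^ (-(γ - 1) / 2) / τ x t := by
    rw [Real.rpow_sub hτ0, Real.rpow_one]
  have e2 : τ x t ^ (-(γ - 1) / 2 - 1 - 1) = τ x t ^ (-(γ - 1) / 2) / τ x t / τ x t := by
    rw [Real.rpow_sub hτ0, Real.rpow_one, e1]
  have e3 : τ x t ^ (-γ) = τ x t ^ (-(γ - 1) / 2) * τ x t ^ (-(γ - 1) / 2) / τ x t := by
    rw [show -γ = -(γ - 1) / 2 + -(γ - 1) / 2 + -1 by ring, Real.rpow_add hτ0,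
      Real.rpow_add hτ0, Real.rpow_neg_one]
    ring
  have e4 : τ x t ^ (-γ - 1)
      = τ x t ^ (-(γ - 1) / 2) * τ x t ^ (-(γ - 1) / 2) / τ x t / τ x t := by
    rw [Real.rpow_sub hτ0, Real.rpow_one, e3]
  have e5 : τ x t ^ (-γ - 1 - 1)
      = τ x t ^ (-(γ - 1) / 2) * τ x t ^ (-(γ - 1) / 2) / τ x t / τ x t / τ x t := by
    rw [Real.rpow_sub hτ0, Real.rpow_one, e4]
  have hQQ : Real.sqrt (K * γ) * Real.sqrt (K * γ) = K * γ := Real.mul_self_sqrt hKγ.le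
  constructor
  · simp only [alphaT, betaT]
    rw [hαt2, hαx2, hDu_eq, hDη_eq, hηxe x, hcval, hk, hη0, e1, e2, e3, e4, e5]
    set Q := Real.sqrt (K * γ) with hQd
    have hKval : K = Q * Q / γ := by
      rw [eq_div_iff hγ0.ne']
      linarith [hQQ]
    rw [hKval]
    simp only [Pi.mul_apply, e4]
    have hP : 0 < τ x t ^ (-(γ - 1) / 2) := Real.rpow_pos_of_pos hτ0 _
    generalize τ x t ^ (-(γ - 1) / 2) = P at hP ⊢
    field_simp
    ring
  · simp only [alphaT, betaT]
    rw [hβt2, hβx2, hDu_eq, hDη_eq, hηxe x, hcval, hk, hη0, e1, e2, e3, e4, e5]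
    set Q := Real.sqrt (K * γ) with hQd
    have hKval : K = Q * Q / γ := by
      rw [eq_div_iff hγ0.ne']
      linarith [hQQ]
    rw [hKval]
    simp only [Pi.mul_apply, e4]
    have hP : 0 < τ x t ^ (-(γ - 1) / 2) := Real.rpow_pos_of_pos hτ0 _
    generalize τ x t ^ (-(γ - 1) / 2) = P at hP ⊢
    field_simp
    ring
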